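/- Let a ∈ ℝ with a ∉ {0, 1}, λ := a/(1 − a), M := {(z¹, z²) ∈ ℂ² : |Re z¹| < 1 and |z²| < 1}, and ρ_a(z¹, z²) := 2(Re z¹ + 1)^a (Re z² + 1)^{1−a}. On ℂ³ with coordinates (w, z¹, z²) (real tangent vectors identified with elements of ℂ³), define the smooth vector fields X₀(w,z) := (i, 0, 0), X₁ := (0, i, 0), X₂ := (0, 0, i), X₃(w,z) := (1/2)(0, z¹ + 1, −λ(z² + 1)), X₄(w,z) := (1/2)(2a(w + 2), z¹ + 1, λ(z² + 1)). Let F(w, z¹, z²) := Re w − ρ_a(z¹, z²) + 2 on ℂ × M and S_a := {p ∈ ℂ × M : F(p) = 0}. Then each of X₀, X₁, X₂, X₃, X₄ is tangent to S_a: for every p ∈ S_a and every j ∈ {0,…,4}, the derivative of F at p in the direction of the vector X_j(p) vanishes, i.e., dF_p(X_j(p)) = 0. -/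

import Mathlib

/-- The infinitesimal CR symmetries `X₀,…,X₄` of the homogeneous hypersurface
`S_a = {Re w = ρ_a(z) − 2}` in `ℂ³` are tangent to `S_a`: the defining function
`F = Re w − ρ_a(z) + 2` has vanishing derivative along each of them at every point of `S_a`. -/
theorem stmt10 (a : ℝ) (ha0 : a ≠ 0) (ha1 : a ≠ 1) (l : ℝ) (hl : l = a / (1 - a))
    (X0 X1 X2 X3 X4 : ℂ × ℂ × ℂ → ℂ × ℂ × ℂ)
    (hX0 : ∀ p, X0 p = ((Complex.I, 0, 0) : ℂ × ℂ × ℂ))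
    (hX1 : ∀ p, X1 p = ((0, Complex.I, 0) : ℂ × ℂ × ℂ))
    (hX2 : ∀ p, X2 p = ((0, 0, Complex.I) : ℂ × ℂ × ℂ))
    (hX3 : ∀ p : ℂ × ℂ × ℂ, X3 p =
      ((1 : ℂ) / 2) • (((0 : ℂ), p.2.1 + 1, -(l : ℂ) * (p.2.2 + 1)) : ℂ × ℂ × ℂ))
    (hX4 : ∀ p : ℂ × ℂ × ℂ, X4 p =
      ((1 : ℂ) / 2) • ((2 * (a : ℂ) * (p.1 + 2), p.2.1 + 1, (l : ℂ) * (p.2.2 + 1)) : ℂ × ℂ × ℂ))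
    (F : ℂ × ℂ × ℂ → ℝ)
    (hF : ∀ p : ℂ × ℂ × ℂ, F p = p.1.re - 2 * (p.2.1.re + 1) ^ a * (p.2.2.re + 1) ^ (1 - a) + 2)
    (p : ℂ × ℂ × ℂ)
    (hp1 : |p.2.1.re| < 1) (hp2 : ‖p.2.2‖ < 1) (hpS : F p = 0) :
    fderiv ℝ F p (X0 p) = 0 ∧ fderiv ℝ F p (X1 p) = 0 ∧ fderiv ℝ F p (X2 p) = 0 ∧
    fderiv ℝ F p (X3 p) = 0 ∧ fderiv ℝ F p (X4 p) = 0 := by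
  have h1a : (1 : ℝ) - a ≠ 0 := sub_ne_zero.mpr (Ne.symm ha1)
  set A : ℝ := p.2.1.re + 1 with hAdef
  set B : ℝ := p.2.2.re + 1 with hBdef
  have hA : 0 < A := by have := abs_lt.mp hp1; simp only [hAdef]; linarith [this.1]
  have hB : 0 < B := by
    have h2 : |p.2.2.re| < 1 := lt_of_le_of_lt (Complex.abs_re_le_norm _) hp2
    have := abs_lt.mp h2; simp only [hBdef]; linarith [this.1]
  set r1 : ℂ × ℂ × ℂ →L[ℝ] ℝ :=
    Complex.reCLM.comp (ContinuousLinearMap.fst ℝ ℂ (ℂ × ℂ)) with hr1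
  set r2 : ℂ × ℂ × ℂ →L[ℝ] ℝ :=
    Complex.reCLM.comp ((ContinuousLinearMap.fst ℝ ℂ ℂ).comp
      (ContinuousLinearMap.snd ℝ ℂ (ℂ × ℂ))) with hr2
  set r3 : ℂ × ℂ × ℂ →L[ℝ] ℝ :=
    Complex.reCLM.comp ((ContinuousLinearMap.snd ℝ ℂ ℂ).comp
      (ContinuousLinearMap.snd ℝ ℂ (ℂ × ℂ))) with hr3
  have h2 : HasFDerivAt (fun q : ℂ × ℂ × ℂ => q.2.1.re + 1) r2 p :=
    r2.hasFDerivAt.add_const 1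
  have h3 : HasFDerivAt (fun q : ℂ × ℂ × ℂ => q.2.2.re + 1) r3 p :=
    r3.hasFDerivAt.add_const 1
  have hg1 : HasFDerivAt (fun q : ℂ × ℂ × ℂ => (q.2.1.re + 1) ^ a)
      ((a * A ^ (a - 1)) • r2) p :=
    by have := (Real.hasDerivAt_rpow_const (x := A) (p := a) (Or.inl hA.ne')).comp_hasFDerivAt p h2; exact this
  have hg2 : HasFDerivAt (fun q : ℂ × ℂ × ℂ => (q.2.2.re + 1) ^ (1 - a))
      (((1 - a) * B ^ (1 - a - 1)) • r3) p :=
    by have := (Real.hasDerivAt_rpow_const (x := B) (p := 1 - a) (Or.inl hB.ne')).comp_hasFDerivAt p h3; exact this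
  have hmul := hg1.mul hg2
  have hFeq : F = fun q : ℂ × ℂ × ℂ =>
      q.1.re - 2 * ((q.2.1.re + 1) ^ a * (q.2.2.re + 1) ^ (1 - a)) + 2 := by
    funext q; rw [hF q]; ring
  have hFd : HasFDerivAt F
      (r1 - (2 : ℝ) • (A ^ a • (((1 - a) * B ^ (1 - a - 1)) • r3)
        + B ^ (1 - a) • ((a * A ^ (a - 1)) • r2))) p := by
    rw [hFeq]
    exact (r1.hasFDerivAt.sub (hmul.const_mul 2)).add_const 2
  have hfd := hFd.fderiv
  have hApow : A ^ (a - 1) * A = A ^ a := by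
    rw [← Real.rpow_add_one hA.ne' (a - 1)]; norm_num
  have hBpow : B ^ (-a) * B = B ^ (1 - a) := by
    rw [← Real.rpow_add_one hB.ne' (-a)]; ring_nf
  have hla : (1 - a) * l = a := by rw [hl]; field_simp
  have hw : p.1.re + 2 = 2 * A ^ a * B ^ (1 - a) := by
    have := hF p; rw [hpS] at this; simp only [← hAdef, ← hBdef] at this; linarith
  have hval : ∀ v : ℂ × ℂ × ℂ,
      (r1 - (2 : ℝ) • (A ^ a • (((1 - a) * B ^ (1 - a - 1)) • r3)
        + B ^ (1 - a) • ((a * A ^ (a - 1)) • r2))) v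
      = v.1.re - 2 * (A ^ a * ((1 - a) * B ^ (-a) * v.2.2.re)
          + B ^ (1 - a) * (a * A ^ (a - 1) * v.2.1.re)) := by
    intro v
    simp [hr1, hr2, hr3, mul_assoc]
    ring
  have e31 : (X3 p).1.re = 0 := by rw [hX3]; simp
  have e32 : (X3 p).2.1.re = A / 2 := by
    rw [hX3]
    simp [Complex.mul_re, Complex.add_re, Complex.add_im, Complex.div_re, Complex.div_im,
      Complex.normSq]
    ring
  have e33 : (X3 p).2.2.re = -(l * B) / 2 := by
    rw [hX3]
    simp [Complex.mul_re, Complex.mul_im, Complex.add_re, Complex.add_im, Complex.div_re,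
      Complex.div_im, Complex.normSq]
    ring
  have e41 : (X4 p).1.re = a * (p.1.re + 2) := by
    rw [hX4]
    simp [Complex.mul_re, Complex.mul_im, Complex.add_re, Complex.add_im, Complex.div_re,
      Complex.div_im, Complex.normSq]
    ring
  have e42 : (X4 p).2.1.re = A / 2 := by
    rw [hX4]
    simp [Complex.mul_re, Complex.add_re, Complex.add_im, Complex.div_re, Complex.div_im,
      Complex.normSq]
    ring
  have e43 : (X4 p).2.2.re = (l * B) / 2 := by
    rw [hX4]
    simp [Complex.mul_re, Complex.mul_im, Complex.add_re, Complex.add_im, Complex.div_re,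
      Complex.div_im, Complex.normSq]
    ring
  refine ⟨?_, ?_, ?_, ?_, ?_⟩
  · rw [hfd, hval, hX0]; simp
  · rw [hfd, hval, hX1]; simp
  · rw [hfd, hval, hX2]; simp
  · rw [hfd, hval, e31, e32, e33]
    linear_combination (-(a * B ^ (1 - a))) * hApow + ((1 - a) * l * A ^ a) * hBpow
      + (A ^ a * B ^ (1 - a)) * hla
  · rw [hfd, hval, e41, e42, e43]
    linear_combination a * hw + (-(a * B ^ (1 - a))) * hApow + (-((1 - a) * l * A ^ a)) * hBpow
      + (-(A ^ a * B ^ (1 - a))) * hla
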